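/- The projective general linear group PGL(2, F₅) = GL(2, F₅)/Z(GL(2, F₅)) contains a nontrivial 2-radical element: there exists an element g ≠ 1 of the quotient of GL(2, ZMod 5) by its center such that for all x, y in this quotient group, the subgroup generated by the commutators ⁅g,x⁆ and ⁅g,y⁆ is solvable. (This is the exceptional case κ(PGL₂(5)) = 3 of the proposition on extensions of rank-one groups by diagonal automorphisms; it reflects the isomorphism PGL₂(5) ≅ S₅.) -/

import Mathlib

open scoped commutatorElement

set_option maxHeartbeats 4000000
set_option synthInstance.maxHeartbeats 1000000
set_option synthInstance.maxSize 4096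
set_option maxRecDepth 100000

section

local instance : Fact (Nat.Prime 5) := ⟨by norm_num⟩

abbrev M2 := Matrix (Fin 2) (Fin 2) (ZMod 5)
abbrev M4 := ZMod 5 × ZMod 5 × ZMod 5 × ZMod 5
abbrev PL := List (M4 × M4)
abbrev G2 := Matrix.GeneralLinearGroup (Fin 2) (ZMod 5)

/-- tuple multiplication mirroring 2×2 matrix multiplication -/
def mul4 (x y : M4) : M4 :=
  (x.1 * y.1 + x.2.1 * y.2.2.1, x.1 * y.2.1 + x.2.1 * y.2.2.2,
   x.2.2.1 * y.1 + x.2.2.2 * y.2.2.1, x.2.2.1 * y.2.1 + x.2.2.2 * y.2.2.2)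

/-- the tuple of entries of a 2×2 matrix -/
def quad (A : M2) : M4 := (A 0 0, A 0 1, A 1 0, A 1 1)

lemma quad_mul (A B : M2) : quad (A * B) = mul4 (quad A) (quad B) := by
  simp only [quad, mul4, Matrix.mul_apply, Fin.sum_univ_two]

lemma quad_inj {A B : M2} (h : quad A = quad B) : A = B := by
  simp only [quad, Prod.mk.injEq] at h
  rw [Matrix.eta_fin_two A, Matrix.eta_fin_two B, h.1, h.2.1, h.2.2.1, h.2.2.2]

lemma quad_one : quad (1 : M2) = (1, 0, 0, 1) := by decide

lemma quad_smul (e : ZMod 5) (A : M2) :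
    quad (e • A) = (e * A 0 0, e * A 0 1, e * A 1 0, e * A 1 1) := by
  simp only [quad, Matrix.smul_apply, smul_eq_mul]
def CL : List M4 := [(1, 0, 0, 1), (1, 1, 2, 3), (1, 2, 4, 4), (1, 3, 1, 4), (1, 4, 3, 3), (2, 0, 0, 3), (2, 1, 2, 4), (2, 2, 4, 2), (2, 3, 1, 2), (2, 4, 3, 4), (3, 0, 0, 2), (3, 1, 2, 1), (3, 2, 4, 3), (3, 3, 1, 3), (3, 4, 3, 1), (4, 0, 0, 4), (4, 1, 2, 2), (4, 2, 4, 1), (4, 3, 1, 1), (4, 4, 3, 2)]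
def ZL : PL := [((1, 0, 0, 1), (1, 0, 0, 1)), ((4, 0, 0, 4), (4, 0, 0, 4))]
def A0 : PL := [((0, 1, 4, 0), (0, 4, 1, 0)), ((0, 2, 2, 0), (0, 3, 3, 0)), ((0, 3, 3, 0), (0, 2, 2, 0)), ((0, 4, 1, 0), (0, 1, 4, 0)), ((1, 0, 0, 1), (1, 0, 0, 1)), ((1, 1, 2, 3), (3, 4, 3, 1)), ((1, 2, 1, 3), (3, 3, 4, 1)), ((1, 3, 4, 3), (3, 2, 1, 1)), ((1, 4, 3, 3), (3, 1, 2, 1)), ((2, 0, 0, 3), (3, 0, 0, 2)), ((2, 1, 2, 4), (4, 4, 3, 2)), ((2, 2, 1, 4), (4, 3, 4, 2)), ((2, 3, 4, 4), (4, 2, 1, 2)), ((2, 4, 3, 4), (4, 1, 2, 2)), ((3, 0, 0, 2), (2, 0, 0, 3)), ((3, 1, 2, 1), (1, 4, 3, 3)), ((3, 2, 1, 1), (1, 3, 4, 3)), ((3, 3, 4, 1), (1, 2, 1, 3)), ((3, 4, 3, 1), (1, 1, 2, 3)), ((4, 0, 0, 4), (4, 0, 0, 4)), ((4, 1, 2,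 2), (2, 4, 3, 4)), ((4, 2, 1, 2), (2, 3, 4, 4)), ((4, 3, 4, 2), (2, 2, 1, 4)), ((4, 4, 3, 2), (2, 1, 2, 4))]
def B0 : PL := [((0, 1, 4, 0), (0, 4, 1, 0)), ((0, 2, 2, 0), (0, 3, 3, 0)), ((0, 3, 3, 0), (0, 2, 2, 0)), ((0, 4, 1, 0), (0, 1, 4, 0)), ((1, 0, 0, 1), (1, 0, 0, 1)), ((2, 0, 0, 3), (3, 0, 0, 2)), ((3, 0, 0, 2), (2, 0, 0, 3)), ((4, 0, 0, 4), (4, 0, 0, 4))]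
def A1 : PL := [((0, 1, 4, 1), (1, 4, 1, 0)), ((0, 2, 2, 1), (1, 3, 3, 0)), ((0, 3, 3, 4), (4, 2, 2, 0)), ((0, 4, 1, 4), (4, 1, 4, 0)), ((1, 0, 0, 1), (1, 0, 0, 1)), ((1, 1, 2, 3), (3, 4, 3, 1)), ((1, 2, 4, 4), (4, 3, 1, 1)), ((1, 3, 3, 0), (0, 2, 2, 1)), ((1, 4, 1, 0), (0, 1, 4, 1)), ((2, 0, 3, 3), (3, 0, 2, 2)), ((2, 1, 2, 4), (4, 4, 3, 2)), ((2, 2, 4, 2), (2, 3, 1, 2)), ((2, 3, 1, 2), (2, 2, 4, 2)), ((2, 4, 0, 3), (3, 1, 0, 2)), ((3, 0, 2, 2), (2, 0, 3, 3)), ((3, 1, 0, 2), (2, 4, 0, 3)), ((3, 2, 4, 3), (3, 3, 1, 3)), ((3, 3, 1, 3), (3, 2, 4, 3)), ((3, 4, 3, 1), (1, 1, 2, 3)), ((4, 0, 0, 4), (4, 0, 0, 4)), ((4, 1, 4, 0), (0, 4, 1, 4)), ((4, 2, 2, 0), (0, 3, 3, 4)), ((4, 3, 1, 1), (1, 2,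 4, 4)), ((4, 4, 3, 2), (2, 1, 2, 4))]
def B1 : PL := [((1, 0, 0, 1), (1, 0, 0, 1)), ((1, 2, 4, 4), (4, 3, 1, 1)), ((2, 0, 3, 3), (3, 0, 2, 2)), ((2, 4, 0, 3), (3, 1, 0, 2)), ((3, 0, 2, 2), (2, 0, 3, 3)), ((3, 1, 0, 2), (2, 4, 0, 3)), ((4, 0, 0, 4), (4, 0, 0, 4)), ((4, 3, 1, 1), (1, 2, 4, 4))]
def A2 : PL := [((0, 1, 4, 4), (4, 4, 1, 0)), ((0, 2, 2, 4), (4, 3, 3, 0)), ((0, 3, 3, 1), (1, 2, 2, 0)), ((0, 4, 1, 1), (1, 1, 4, 0)), ((1, 0, 0, 1), (1, 0, 0, 1)), ((1, 1, 4, 0), (0, 4, 1, 1)), ((1, 2, 2, 0), (0, 3, 3, 1)), ((1, 3, 1, 4), (4, 2, 4, 1)), ((1, 4, 3, 3), (3, 1, 2, 1)), ((2, 0, 2, 3), (3, 0, 3, 2)), ((2, 1, 0, 3), (3, 4, 0, 2)), ((2, 2, 4, 2), (2, 3, 1, 2)), ((2, 3, 1, 2), (2, 2, 4, 2)), ((2,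 4, 3, 4), (4, 1, 2, 2)), ((3, 0, 3, 2), (2, 0, 2, 3)), ((3, 1, 2, 1), (1, 4, 3, 3)), ((3, 2, 4, 3), (3, 3, 1, 3)), ((3, 3, 1, 3), (3, 2, 4, 3)), ((3, 4, 0, 2), (2, 1, 0, 3)), ((4, 0, 0, 4), (4, 0, 0, 4)), ((4, 1, 2, 2), (2, 4, 3, 4)), ((4, 2, 4, 1), (1, 3, 1, 4)), ((4, 3, 3, 0), (0, 2, 2, 4)), ((4, 4, 1, 0), (0, 1, 4, 4))]
def B2 : PL := [((1, 0, 0, 1), (1, 0, 0, 1)), ((1, 3, 1, 4), (4, 2, 4, 1)), ((2, 0, 2, 3), (3, 0, 3, 2)), ((2, 1, 0, 3), (3, 4, 0, 2)), ((3, 0, 3, 2), (2, 0, 2, 3)), ((3, 4, 0, 2), (2, 1, 0, 3)), ((4, 0, 0, 4), (4, 0, 0, 4)), ((4, 2, 4, 1), (1, 3, 1, 4))]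
def A3 : PL := [((1, 0, 0, 1), (1, 0, 0, 1)), ((1, 1, 2, 3), (3, 4, 3, 1)), ((1, 3, 1, 4), (4, 2, 4, 1)), ((2, 0, 4, 3), (3, 0, 1, 2)), ((2, 1, 2, 4), (4, 4, 3, 2)), ((2, 2, 0, 3), (3, 3, 0, 2)), ((3, 0, 1, 2), (2, 0, 4, 3)), ((3, 3, 0, 2), (2, 2, 0, 3)), ((3, 4, 3, 1), (1, 1, 2, 3)), ((4, 0, 0, 4), (4, 0, 0, 4)), ((4, 2, 4, 1), (1, 3, 1, 4)), ((4, 4, 3, 2), (2, 1, 2, 4))]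
def B3 : PL := [((1, 0, 0, 1), (1, 0, 0, 1)), ((1, 1, 2, 3), (3, 4, 3, 1)), ((3, 4, 3, 1), (1, 1, 2, 3))]
def A4 : PL := [((1, 0, 0, 1), (1, 0, 0, 1)), ((1, 1, 3, 4), (4, 4, 2, 1)), ((1, 4, 2, 4), (4, 1, 3, 1)), ((2, 0, 0, 3), (3, 0, 0, 2)), ((2, 2, 4, 2), (2, 3, 1, 2)), ((2, 3, 1, 2), (2, 2, 4, 2)), ((3, 0, 0, 2), (2, 0, 0, 3)), ((3, 2, 4, 3), (3, 3, 1, 3)), ((3, 3, 1, 3), (3, 2, 4, 3)), ((4, 0, 0, 4), (4, 0, 0, 4)), ((4, 1, 3, 1), (1, 4, 2, 4)), ((4, 4, 2, 1), (1, 1, 3, 4))]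
def B4 : PL := [((1, 0, 0, 1), (1, 0, 0, 1)), ((2, 2, 4, 2), (2, 3, 1, 2)), ((2, 3, 1, 2), (2, 2, 4, 2))]
def A5 : PL := [((1, 0, 0, 1), (1, 0, 0, 1)), ((1, 2, 4, 4), (4, 3, 1, 1)), ((1, 3, 1, 4), (4, 2, 4, 1)), ((2, 0, 0, 3), (3, 0, 0, 2)), ((2, 1, 3, 2), (2, 4, 2, 2)), ((2, 4, 2, 2), (2, 1, 3, 2)), ((3, 0, 0, 2), (2, 0, 0, 3)), ((3, 1, 3, 3), (3, 4, 2, 3)), ((3, 4, 2, 3), (3, 1, 3, 3)), ((4, 0, 0, 4), (4, 0, 0, 4)), ((4, 2, 4, 1), (1, 3, 1, 4)), ((4, 3, 1, 1), (1, 2, 4, 4))]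
def B5 : PL := [((1, 0, 0, 1), (1, 0, 0, 1)), ((2, 1, 3, 2), (2, 4, 2, 2)), ((2, 4, 2, 2), (2, 1, 3, 2))]
def A6 : PL := [((1, 0, 0, 1), (1, 0, 0, 1)), ((1, 2, 4, 4), (4, 3, 1, 1)), ((1, 4, 3, 3), (3, 1, 2, 1)), ((2, 0, 1, 3), (3, 0, 4, 2)), ((2, 3, 0, 3), (3, 2, 0, 2)), ((2, 4, 3, 4), (4, 1, 2, 2)), ((3, 0, 4, 2), (2, 0, 1, 3)), ((3, 1, 2, 1), (1, 4, 3, 3)), ((3, 2, 0, 2), (2, 3, 0, 3)), ((4, 0, 0, 4), (4, 0, 0, 4)), ((4, 1, 2, 2), (2, 4, 3, 4)), ((4, 3, 1, 1), (1, 2, 4, 4))]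
def B6 : PL := [((1, 0, 0, 1), (1, 0, 0, 1)), ((1, 4, 3, 3), (3, 1, 2, 1)), ((3, 1, 2, 1), (1, 4, 3, 3))]
def Ms : List (PL × PL) := [(A0, B0), (A1, B1), (A2, B2), (A3, B3), (A4, B4), (A5, B5), (A6, B6)]
abbrev IsGrpList (L : PL) : Prop :=
  (((1 : ZMod 5), (0 : ZMod 5), (0 : ZMod 5), (1 : ZMod 5)), ((1 : ZMod 5), (0 : ZMod 5), (0 : ZMod 5), (1 : ZMod 5))) ∈ L ∧
  (∀ p ∈ L, mul4 p.1 p.2 = (1, 0, 0, 1) ∧ (p.2, p.1) ∈ L) ∧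
  ∀ p ∈ L, ∀ q ∈ L, (mul4 p.1 q.1, mul4 q.2 p.2) ∈ L

abbrev CommCond (L L' : PL) : Prop :=
  ∀ p ∈ L, ∀ q ∈ L,
    (mul4 p.1 (mul4 q.1 (mul4 p.2 q.2)), mul4 q.1 (mul4 p.1 (mul4 q.2 p.2))) ∈ L'

abbrev CommTriv (L : PL) : Prop :=
  ∀ p ∈ L, ∀ q ∈ L, mul4 p.1 (mul4 q.1 (mul4 p.2 q.2)) = (1, 0, 0, 1)

attribute [local instance 2000] List.decidableBAll List.decidableBEx

lemma allOk : ∀ e ∈ Ms, IsGrpList e.1 ∧ IsGrpList e.2 ∧ CommCond e.1 e.2 ∧ CommCond e.2 ZL := by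
  decide

lemma ZLOk : IsGrpList ZL ∧ CommTriv ZL := by decide

lemma cover : ∀ m1 ∈ CL, ∀ m2 ∈ CL, ∃ e ∈ Ms,
    (∃ p ∈ e.1, p.1 = m1) ∧ (∃ p ∈ e.1, p.1 = m2) := by decide

lemma comm_val_aux : ∀ (a b c d e : ZMod 5), e * (a * d - b * c) = 1 →
    mul4 (mul4 (mul4 (0, 2, 1, 0) (a, b, c, d)) (0, 1, 3, 0))
      (e * d, e * (-b), e * (-c), e * a) ∈ CL := by
  decide

/-- the inverse tuple-matrix operation -/
def unquad (v : M4) : M2 := !![v.1, v.2.1; v.2.2.1, v.2.2.2]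

lemma quad_unquad (v : M4) : quad (unquad v) = v := by
  simp only [quad, unquad]
  simp [Matrix.cons_val_zero, Matrix.cons_val_one, Matrix.head_cons]

/-- The subgroup of `GL₂(F₅)` given by an explicit list of (value, inverse) entry tuples. -/
def pairsSubgroup (L : PL) (h : IsGrpList L) : Subgroup G2 where
  carrier := {u : G2 | (quad (u : M2), quad ((u⁻¹ : G2) : M2)) ∈ L}
  one_mem' := by
    have h1 := h.1
    simp only [Set.mem_setOf_eq, inv_one, Units.val_one, quad_one]
    exact h1
  mul_mem' := by
    intro a b ha hb
    have := h.2.2 _ ha _ hb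
    simpa only [Set.mem_setOf_eq, mul_inv_rev, Units.val_mul, quad_mul] using this
  inv_mem' := by
    intro a ha
    have := (h.2.1 _ ha).2
    simpa only [Set.mem_setOf_eq, inv_inv] using this

lemma mem_pairsSubgroup {L : PL} {h : IsGrpList L} {u : G2} :
    u ∈ pairsSubgroup L h ↔ (quad (u : M2), quad ((u⁻¹ : G2) : M2)) ∈ L := Iff.rfl

lemma inv_val_eq {u : G2} {m mi : M2} (hv : (u : M2) = m) (h2 : m * mi = 1) :
    ((u⁻¹ : G2) : M2) = mi := by
  calc ((u⁻¹ : G2) : M2) = ((u⁻¹ : G2) : M2) * (m * mi) := by rw [h2, mul_one]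
  _ = (((u⁻¹ : G2) : M2) * (u : M2)) * mi := by rw [hv, mul_assoc]
  _ = mi := by rw [Units.inv_mul, one_mul]

lemma mem_of_val {L : PL} {h : IsGrpList L} {u : G2} {m mi : M4}
    (hp : (m, mi) ∈ L) (hv : quad (u : M2) = m) : u ∈ pairsSubgroup L h := by
  have h1 : mul4 m mi = (1, 0, 0, 1) := (h.2.1 _ hp).1
  have hum : (u : M2) = unquad m := quad_inj (by rw [hv, quad_unquad])
  have hmm : unquad m * unquad mi = 1 := by
    apply quad_inj
    rw [quad_mul, quad_unquad, quad_unquad, quad_one, h1]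
  have h2 : ((u⁻¹ : G2) : M2) = unquad mi := inv_val_eq hum hmm
  rw [mem_pairsSubgroup, hv, h2, quad_unquad]
  exact hp

lemma commutator_le_pairs {L L' : PL} {h : IsGrpList L} {h' : IsGrpList L'}
    (hc : CommCond L L') :
    ⁅pairsSubgroup L h, pairsSubgroup L h⁆ ≤ pairsSubgroup L' h' := by
  rw [Subgroup.commutator_le]
  intro g1 h1 g2 h2
  have := hc _ (mem_pairsSubgroup.mp h1) _ (mem_pairsSubgroup.mp h2)
  rw [mem_pairsSubgroup]
  simpa only [commutatorElement_def, mul_inv_rev, inv_inv, Units.val_mul, quad_mul,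
    mul_assoc] using this

lemma commutator_le_bot {L : PL} {h : IsGrpList L} (hc : CommTriv L) :
    ⁅pairsSubgroup L h, pairsSubgroup L h⁆ ≤ ⊥ := by
  rw [Subgroup.commutator_le]
  intro g1 h1 g2 h2
  have := hc _ (mem_pairsSubgroup.mp h1) _ (mem_pairsSubgroup.mp h2)
  rw [Subgroup.mem_bot]
  apply Units.ext
  apply quad_inj
  rw [Units.val_one, quad_one]
  simpa only [commutatorElement_def, Units.val_mul, quad_mul, mul_assoc] using this

lemma solvable_of_chain {G : Type*} [Group G] {K0 K1 K2 : Subgroup G}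
    (h1 : ⁅K0, K0⁆ ≤ K1) (h2 : ⁅K1, K1⁆ ≤ K2) (h3 : ⁅K2, K2⁆ ≤ ⊥) :
    IsSolvable K0 := by
  have e0 : Subgroup.map K0.subtype (derivedSeries K0 0) ≤ K0 := by
    rw [derivedSeries_zero, ← MonoidHom.range_eq_map, Subgroup.range_subtype]
  have e1 : Subgroup.map K0.subtype (derivedSeries K0 1) ≤ K1 := by
    rw [derivedSeries_succ, Subgroup.map_commutator]
    exact le_trans (Subgroup.commutator_mono e0 e0) h1
  have e2 : Subgroup.map K0.subtype (derivedSeries K0 2) ≤ K2 := by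
    rw [derivedSeries_succ, Subgroup.map_commutator]
    exact le_trans (Subgroup.commutator_mono e1 e1) h2
  have e3 : Subgroup.map K0.subtype (derivedSeries K0 3) ≤ ⊥ := by
    rw [derivedSeries_succ, Subgroup.map_commutator]
    exact le_trans (Subgroup.commutator_mono e2 e2) h3
  refine ⟨⟨3, ?_⟩⟩
  have := (Subgroup.map_eq_bot_iff _).mp (le_bot_iff.mp e3)
  rwa [Subgroup.ker_subtype, le_bot_iff] at this

/-- Our distinguished element of `GL₂(F₅)`: the antidiagonal matrix `[[0,2],[1,0]]`. -/
def Wu : G2 := ⟨!![0, 2; 1, 0], !![0, 1; 3, 0], by decide, by decide⟩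

lemma comm_val_mem (X : G2) : quad ((⁅Wu, X⁆ : G2) : M2) ∈ CL := by
  set A : M2 := (X : M2) with hA
  have hu : IsUnit A := ⟨X, rfl⟩
  have hdet : A.det ≠ 0 := IsUnit.ne_zero ((Matrix.isUnit_iff_isUnit_det A).mp hu)
  set e : ZMod 5 := (A.det)⁻¹ with he
  have hed : e * A.det = 1 := inv_mul_cancel₀ hdet
  have hadj : A * (e • !![A 1 1, -(A 0 1); -(A 1 0), A 0 0]) = 1 := by
    rw [← Matrix.adjugate_fin_two A, Matrix.mul_smul, Matrix.mul_adjugate, smul_smul,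
      hed, one_smul]
  have hxv : ((X⁻¹ : G2) : M2) = e • !![A 1 1, -(A 0 1); -(A 1 0), A 0 0] :=
    inv_val_eq rfl hadj
  have hqxv : quad ((X⁻¹ : G2) : M2)
      = (e * (A 1 1), e * (-(A 0 1)), e * (-(A 1 0)), e * (A 0 0)) := by
    rw [hxv, quad_smul]
    simp [Matrix.cons_val_zero, Matrix.cons_val_one, Matrix.head_cons]
  have hqA : quad A = (A 0 0, A 0 1, A 1 0, A 1 1) := rfl
  have hqW : quad ((Wu : G2) : M2) = ((0 : ZMod 5), 2, 1, 0) := by decide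
  have hqWi : quad ((Wu⁻¹ : G2) : M2) = ((0 : ZMod 5), 1, 3, 0) := by decide
  have hD := comm_val_aux (A 0 0) (A 0 1) (A 1 0) (A 1 1) e
    (by rw [← Matrix.det_fin_two A]; exact hed)
  have hval : quad ((⁅Wu, X⁆ : G2) : M2)
      = mul4 (mul4 (mul4 ((0 : ZMod 5), 2, 1, 0) (A 0 0, A 0 1, A 1 0, A 1 1))
          ((0 : ZMod 5), 1, 3, 0))
          (e * (A 1 1), e * (-(A 0 1)), e * (-(A 1 0)), e * (A 0 0)) := by
    rw [commutatorElement_def]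
    simp only [Units.val_mul, quad_mul]
    rw [hqxv, hqW, hqWi, ← hA, hqA]
  rw [hval]
  exact hD

lemma gl_key (X Y : G2) :
    IsSolvable (Subgroup.closure ({⁅Wu, X⁆, ⁅Wu, Y⁆} : Set G2)) := by
  obtain ⟨e, he, ⟨p1, hp1, hp1v⟩, ⟨p2, hp2, hp2v⟩⟩ :=
    cover _ (comm_val_mem X) _ (comm_val_mem Y)
  obtain ⟨hg1, hg2, hc1, hc2⟩ := allOk e he
  have hsolv : IsSolvable (pairsSubgroup e.1 hg1) :=
    solvable_of_chain (K1 := pairsSubgroup e.2 hg2) (K2 := pairsSubgroup ZL ZLOk.1)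
      (commutator_le_pairs hc1) (commutator_le_pairs hc2) (commutator_le_bot ZLOk.2)
  have hle : Subgroup.closure ({⁅Wu, X⁆, ⁅Wu, Y⁆} : Set G2) ≤ pairsSubgroup e.1 hg1 := by
    rw [Subgroup.closure_le]
    rintro z (rfl | rfl)
    · exact mem_of_val (m := p1.1) (mi := p1.2) (by rw [Prod.mk.eta]; exact hp1) hp1v.symm
    · exact mem_of_val (m := p2.1) (mi := p2.2) (by rw [Prod.mk.eta]; exact hp2) hp2v.symm
  haveI : Group.IsSolvable (pairsSubgroup e.1 hg1) := hsolv
  exact solvable_of_solvable_injective (Subgroup.inclusion_injective hle)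

end

/-- `PGL(2, F₅) = GL(2, F₅)/Z(GL(2, F₅))` contains a nontrivial 2-radical element:
some `g ≠ 1` such that for all `x, y` the subgroup generated by `⁅g,x⁆` and `⁅g,y⁆`
is solvable (reflecting `PGL₂(5) ≅ S₅`). -/
theorem PGL2_F5_has_two_radical :
    ∃ g : Matrix.GeneralLinearGroup (Fin 2) (ZMod 5) ⧸
        Subgroup.center (Matrix.GeneralLinearGroup (Fin 2) (ZMod 5)), g ≠ 1 ∧
      ∀ x y : Matrix.GeneralLinearGroup (Fin 2) (ZMod 5) ⧸
          Subgroup.center (Matrix.GeneralLinearGroup (Fin 2) (ZMod 5)),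
        IsSolvable (Subgroup.closure
          ({⁅g, x⁆, ⁅g, y⁆} : Set (Matrix.GeneralLinearGroup (Fin 2) (ZMod 5) ⧸
            Subgroup.center (Matrix.GeneralLinearGroup (Fin 2) (ZMod 5))))) := by
  refine ⟨(Wu : G2 ⧸ Subgroup.center G2), ?_, ?_⟩
  · rw [Ne, QuotientGroup.eq_one_iff]
    intro hmem
    have hcomm := Subgroup.mem_center_iff.mp hmem
      (⟨!![1, 1; 0, 1], !![1, 4; 0, 1], by decide, by decide⟩ : G2)
    have hv := congrArg Units.val hcomm
    revert hv
    decide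
  · intro x y
    refine QuotientGroup.induction_on x fun X => QuotientGroup.induction_on y fun Y => ?_
    haveI : Group.IsSolvable (Subgroup.closure ({⁅Wu, X⁆, ⁅Wu, Y⁆} : Set G2)) := gl_key X Y
    have himg : (Subgroup.closure ({⁅Wu, X⁆, ⁅Wu, Y⁆} : Set G2)).map
        (QuotientGroup.mk' (Subgroup.center G2))
        = Subgroup.closure ({⁅(Wu : G2 ⧸ Subgroup.center G2), (X : G2 ⧸ Subgroup.center G2)⁆,
            ⁅(Wu : G2 ⧸ Subgroup.center G2), (Y : G2 ⧸ Subgroup.center G2)⁆}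
            : Set (G2 ⧸ Subgroup.center G2)) := by
      rw [MonoidHom.map_closure]
      congr 1
      simp [Set.image_insert_eq, Set.image_singleton, commutatorElement_def]
    rw [← himg]
    exact solvable_of_surjective
      (MonoidHom.subgroupMap_surjective (QuotientGroup.mk' (Subgroup.center G2)) _)
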